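/- arXiv:2211.04651 — 2 statements merged into one kernel-verified Lean document; each statement's English description precedes it below -/
import Mathlib

section
/- For any configurations a, s and any integers i ≤ j, the truncated departure process satisfies D_{i,0}(a,s)[i,j] = a[i,j] − max_{l ∈ [i,j]} max(a[l,j] − s[l,j], 0) = min( a[i,j], min_{l ∈ [i,j]} ( a[i,l−1] + s[l,j] ) ), where a[i,i−1] = 0 by the empty-sum convention. -/
open scoped BigOperators

/-- A particle configuration on `ℤ`: a `{0,1}`-valued function. -/
abbrev Config := ℤ → ℤ

/-- `x` takes only the values `0` and `1`. -/
def IsConfig (x : Config) : Prop := ∀ i, x i = 0 ∨ x i = 1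

/-- `x[i,j] = ∑_{k=i}^j x(k)` (zero if `j < i`). -/
noncomputable def cnt (x : Config) (i j : ℤ) : ℤ := ∑ k ∈ Finset.Icc i j, x k

/-- `(a,s)` has finite queue lengths. -/
def FinQ (a s : Config) : Prop :=
  ∀ i : ℤ, BddAbove {v : ℤ | ∃ j ≤ i, v = cnt a j i - cnt s j i}

/-- The queue length `Q_i(a,s) = sup_{j ≤ i} max(a[j,i] - s[j,i], 0)`. -/
noncomputable def queue (a s : Config) (i : ℤ) : ℤ :=
  sSup {q : ℤ | ∃ j ≤ i, q = max (cnt a j i - cnt s j i) 0}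

/-- The departure configuration `D(a,s)`. -/
noncomputable def dep (a s : Config) : Config := fun i =>
  if s i = 1 ∧ (0 < queue a s (i - 1) ∨ a i = 1) then 1 else 0

/-- The unused-service configuration `U(a,s)`. -/
noncomputable def unusedSrv (a s : Config) : Config := fun i =>
  if s i = 1 ∧ queue a s (i - 1) = 0 ∧ a i = 0 then 1 else 0

/-- `R(a,s)(i) = a(i) + U(a,s)(i)`. -/
noncomputable def Rmap (a s : Config) : Config := fun i => a i + unusedSrv a s i

/-- Truncation: `x_{n,0}(i) = x(i)` for `i ≥ n`, `0` otherwise. -/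
def trunc (x : Config) (n : ℤ) : Config := fun i => if n ≤ i then x i else 0

/-- Left-peeling tandem queue: `Dtandem x [s₁,…,s_k] = D(…D(D(x,s₁),s₂)…,s_k)`. -/
noncomputable def Dtandem : Config → List Config → Config
  | x, [] => x
  | x, s :: rest => Dtandem (dep x s) rest

/-- `DtandemList [x₁,…,xₙ] = Dⁿ(x₁,…,xₙ)`. -/
noncomputable def DtandemList : List Config → Config
  | [] => fun _ => 0
  | x :: rest => Dtandem x rest

/-- `DtandemN x = Dⁿ(x 0, …, x (n-1))`. -/
noncomputable def DtandemN {n : ℕ} (x : Fin n → Config) : Config :=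
  DtandemList (List.ofFn x)

/-- Every pair appearing as (arrivals, services) in the recursive definition of the
tandem departure map has finite queue lengths. -/
def TandemFinQ : List Config → Prop
  | [] => True
  | [_] => True
  | x :: s :: rest => FinQ x s ∧ TandemFinQ (dep x s :: rest)
  termination_by l => l.length

lemma icc_eq_ico (i j : ℤ) : Finset.Icc i j = Finset.Ico i (j+1) := by
  ext m; simp [Finset.mem_Icc, Finset.mem_Ico]

lemma cnt_of_lt (x : Config) {i j : ℤ} (h : j < i) : cnt x i j = 0 := by
  simp [cnt, Finset.Icc_eq_empty_of_lt h]

lemma cnt_self (x : Config) (i : ℤ) : cnt x i i = x i := by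
  simp [cnt]

lemma cnt_nonneg {x : Config} (hx : IsConfig x) (i j : ℤ) : 0 ≤ cnt x i j :=
  Finset.sum_nonneg fun k _ => by rcases hx k with h | h <;> omega

lemma cnt_succ (x : Config) {i j : ℤ} (h : i ≤ j + 1) :
    cnt x i (j + 1) = cnt x i j + x (j + 1) := by
  unfold cnt
  rw [show Finset.Icc i (j+1) = insert (j+1) (Finset.Icc i j) by
    ext m; simp [Finset.mem_Icc, Finset.mem_insert]; omega]
  rw [Finset.sum_insert (by simp [Finset.mem_Icc])]
  ring

lemma cnt_split (x : Config) {i l j : ℤ} (h1 : i ≤ l) (h2 : l ≤ j + 1) :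
    cnt x i j = cnt x i (l - 1) + cnt x l j := by
  unfold cnt
  rw [icc_eq_ico, icc_eq_ico, icc_eq_ico, show l - 1 + 1 = l by ring]
  rw [← Finset.Ico_union_Ico_eq_Ico h1 h2,
    Finset.sum_union (Finset.Ico_disjoint_Ico_consecutive i l (j+1))]

lemma cnt_trunc (a : Config) (i j k : ℤ) :
    cnt (trunc a i) j k = cnt a (max i j) k := by
  unfold cnt trunc
  rw [← Finset.sum_subset (Finset.Icc_subset_Icc (le_max_right i j) le_rfl)
      (fun m hm hm' => ?_)]
  · exact Finset.sum_congr rfl fun m hm => by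
      rw [if_pos]; simp [Finset.mem_Icc] at hm; omega
  · simp [Finset.mem_Icc] at hm hm'; rw [if_neg]; omega

lemma queue_trunc_lt (a s : Config) {i k : ℤ} (h : k < i) :
    queue (trunc a i) (trunc s i) k = 0 := by
  have hset : {q : ℤ | ∃ j ≤ k, q = max (cnt (trunc a i) j k - cnt (trunc s i) j k) 0}
      = {0} := by
    ext q
    simp only [Set.mem_setOf_eq, Set.mem_singleton_iff]
    constructor
    · rintro ⟨j, hj, rfl⟩
      rw [cnt_trunc, cnt_trunc, cnt_of_lt _ (lt_of_lt_of_le h (le_max_left i j)),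
        cnt_of_lt _ (lt_of_lt_of_le h (le_max_left i j))]
      simp
    · rintro rfl
      exact ⟨k, le_rfl, by
        rw [cnt_trunc, cnt_trunc, cnt_of_lt _ (lt_of_lt_of_le h (le_max_left i k)),
          cnt_of_lt _ (lt_of_lt_of_le h (le_max_left i k))]; simp⟩
  rw [queue, hset, csSup_singleton]

lemma cnt_trunc_of_le (a : Config) {i j : ℤ} (h : i ≤ j) (k : ℤ) :
    cnt (trunc a i) j k = cnt a j k := by
  rw [cnt_trunc, max_eq_right h]

lemma queue_trunc (a s : Config) {i k : ℤ} (h : i ≤ k) :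
    queue (trunc a i) (trunc s i) k
      = (Finset.Icc i k).sup' (Finset.nonempty_Icc.mpr h)
          (fun l => max (cnt a l k - cnt s l k) 0) := by
  rw [queue, Finset.sup'_eq_csSup_image]
  congr 1
  ext q
  simp only [Set.mem_setOf_eq, Set.mem_image, Finset.mem_coe, Finset.mem_Icc]
  constructor
  · rintro ⟨j, hj, rfl⟩
    refine ⟨max i j, ⟨le_max_left _ _, by omega⟩, ?_⟩
    rw [cnt_trunc, cnt_trunc]
  · rintro ⟨l, ⟨hl1, hl2⟩, rfl⟩
    exact ⟨l, hl2, by rw [cnt_trunc_of_le _ hl1, cnt_trunc_of_le _ hl1]⟩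

lemma Qf_nonneg (a s : Config) {i k : ℤ} (h : i ≤ k) :
    0 ≤ (Finset.Icc i k).sup' (Finset.nonempty_Icc.mpr h)
        (fun l => max (cnt a l k - cnt s l k) 0) := by
  have := Finset.le_sup' (fun l => max (cnt a l k - cnt s l k) 0)
    (Finset.mem_Icc.mpr ⟨le_refl i, h⟩)
  omega

lemma Qf_succ (a s : Config) {i k : ℤ} (h : i ≤ k) :
    (Finset.Icc i (k+1)).sup' (Finset.nonempty_Icc.mpr (by omega))
        (fun l => max (cnt a l (k+1) - cnt s l (k+1)) 0)
      = max ((Finset.Icc i k).sup' (Finset.nonempty_Icc.mpr h)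
          (fun l => max (cnt a l k - cnt s l k) 0) + a (k+1) - s (k+1)) 0 := by
  set Q := (Finset.Icc i k).sup' (Finset.nonempty_Icc.mpr h)
      (fun l => max (cnt a l k - cnt s l k) 0) with hQ
  set S := (Finset.Icc i (k+1)).sup' (Finset.nonempty_Icc.mpr (by omega : i ≤ k+1))
      (fun l => max (cnt a l (k+1) - cnt s l (k+1)) 0) with hS
  have hQ0 : 0 ≤ Q := Qf_nonneg a s h
  apply le_antisymm
  · apply Finset.sup'_le
    intro l hl
    rw [Finset.mem_Icc] at hl
    by_cases hlk : l ≤ k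
    · have h1 := Finset.le_sup' (fun l => max (cnt a l k - cnt s l k) 0)
        (Finset.mem_Icc.mpr ⟨hl.1, hlk⟩)
      rw [← hQ] at h1
      have e1 : cnt a l (k+1) = cnt a l k + a (k+1) := cnt_succ a (by omega)
      have e2 : cnt s l (k+1) = cnt s l k + s (k+1) := cnt_succ s (by omega)
      omega
    · have hl1 : l = k + 1 := by omega
      subst hl1
      rw [cnt_self, cnt_self]
      omega
  · have hS0 : 0 ≤ S := Qf_nonneg a s (by omega)
    have hmem : (k+1) ∈ Finset.Icc i (k+1) := Finset.mem_Icc.mpr ⟨by omega, le_refl _⟩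
    have hc : a (k+1) - s (k+1) ≤ S := by
      have := Finset.le_sup' (fun l => max (cnt a l (k+1) - cnt s l (k+1)) 0) hmem
      rw [cnt_self, cnt_self] at this
      omega
    have hQS : Q ≤ S - (a (k+1) - s (k+1)) := by
      rw [hQ]
      apply Finset.sup'_le
      intro l hl
      rw [Finset.mem_Icc] at hl
      have hmem2 : l ∈ Finset.Icc i (k+1) := Finset.mem_Icc.mpr ⟨hl.1, by omega⟩
      have h1 := Finset.le_sup' (fun l => max (cnt a l (k+1) - cnt s l (k+1)) 0) hmem2
      rw [← hS] at h1
      have e1 : cnt a l (k+1) = cnt a l k + a (k+1) := cnt_succ a (by omega)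
      have e2 : cnt s l (k+1) = cnt s l k + s (k+1) := cnt_succ s (by omega)
      omega
    omega

lemma dep_key (q x y d : ℤ) (hq : 0 ≤ q) (hx : x = 0 ∨ x = 1) (hy : y = 0 ∨ y = 1)
    (hd : d = if y = 1 ∧ (0 < q ∨ x = 1) then 1 else 0) :
    d = q + x - max (q + x - y) 0 := by
  subst hd
  split_ifs with hc
  · omega
  · rw [not_and_or, not_or] at hc
    omega

lemma main_formula (a s : Config) (ha : IsConfig a) (hs : IsConfig s) (i j : ℤ)
    (hij : i ≤ j) :
    ∀ H : (Finset.Icc i j).Nonempty,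
    cnt (dep (trunc a i) (trunc s i)) i j
      = cnt a i j - (Finset.Icc i j).sup' H
          (fun l => max (cnt a l j - cnt s l j) 0) := by
  refine Int.le_induction (motive := fun n _ => ∀ H : (Finset.Icc i n).Nonempty,
    cnt (dep (trunc a i) (trunc s i)) i n
      = cnt a i n - (Finset.Icc i n).sup' H
          (fun l => max (cnt a l n - cnt s l n) 0)) ?_ ?_ j hij
  · intro H
    have hsup : (Finset.Icc i i).sup' H (fun l => max (cnt a l i - cnt s l i) 0)
        = max (a i - s i) 0 := by
      apply le_antisymm
      · apply Finset.sup'_le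
        intro l hl
        rw [Finset.mem_Icc] at hl
        have hli : l = i := by omega
        subst hli
        rw [cnt_self, cnt_self]
      · have := Finset.le_sup' (fun l => max (cnt a l i - cnt s l i) 0)
          (Finset.mem_Icc.mpr ⟨le_refl i, le_refl i⟩) (s := Finset.Icc i i)
        rwa [cnt_self, cnt_self] at this
    rw [hsup, cnt_self, cnt_self]
    have hq : queue (trunc a i) (trunc s i) (i-1) = 0 := queue_trunc_lt a s (by omega)
    have hd : dep (trunc a i) (trunc s i) i
        = if s i = 1 ∧ (0 < (0:ℤ) ∨ a i = 1) then 1 else 0 := by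
      simp only [dep, trunc, hq, if_pos (le_refl i)]
    rw [hd]
    rcases ha i with h1 | h1 <;> rcases hs i with h2 | h2 <;> rw [h1, h2] <;>
      norm_num
  · intro k hk IH H
    have HK : (Finset.Icc i k).Nonempty := Finset.nonempty_Icc.mpr hk
    have hQf := Qf_succ a s hk
    have hsup : (Finset.Icc i (k+1)).sup' H (fun l => max (cnt a l (k+1) - cnt s l (k+1)) 0)
        = (Finset.Icc i (k+1)).sup' (Finset.nonempty_Icc.mpr (by omega))
            (fun l => max (cnt a l (k+1) - cnt s l (k+1)) 0) := rfl
    rw [cnt_succ _ (by omega : i ≤ k+1), cnt_succ a (by omega : i ≤ k+1), IH HK,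
      hsup, hQf]
    have hq : queue (trunc a i) (trunc s i) (k+1-1)
        = (Finset.Icc i k).sup' (Finset.nonempty_Icc.mpr hk)
            (fun l => max (cnt a l k - cnt s l k) 0) := by
      rw [show (k+1-1 : ℤ) = k by ring]
      exact queue_trunc a s hk
    have hd : dep (trunc a i) (trunc s i) (k+1)
        = if s (k+1) = 1 ∧ (0 < (Finset.Icc i k).sup' (Finset.nonempty_Icc.mpr hk)
            (fun l => max (cnt a l k - cnt s l k) 0) ∨ a (k+1) = 1) then 1 else 0 := by
      simp only [dep, trunc, hq, if_pos (by omega : i ≤ k+1)]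
    have hQHK : (Finset.Icc i k).sup' (Finset.nonempty_Icc.mpr hk)
        (fun l => max (cnt a l k - cnt s l k) 0)
        = (Finset.Icc i k).sup' HK (fun l => max (cnt a l k - cnt s l k) 0) := rfl
    have := dep_key _ (a (k+1)) (s (k+1)) _ (Qf_nonneg a s hk) (ha (k+1)) (hs (k+1)) hd
    rw [hQHK] at this hQf ⊢
    omega


/-- Explicit formulas for the truncated departure process:
`D_{i,0}(a,s)[i,j] = a[i,j] − max_{l ∈ [i,j]} max(a[l,j] − s[l,j], 0)
 = min(a[i,j], min_{l ∈ [i,j]} (a[i,l−1] + s[l,j]))`. -/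
theorem stmt2 (a s : Config) (ha : IsConfig a) (hs : IsConfig s) (i j : ℤ) (hij : i ≤ j) :
    cnt (dep (trunc a i) (trunc s i)) i j
        = cnt a i j - (Finset.Icc i j).sup' (Finset.nonempty_Icc.mpr hij)
            (fun l => max (cnt a l j - cnt s l j) 0)
      ∧
    cnt (dep (trunc a i) (trunc s i)) i j
        = min (cnt a i j) ((Finset.Icc i j).inf' (Finset.nonempty_Icc.mpr hij)
            (fun l => cnt a i (l - 1) + cnt s l j)) := by
  have h1 := main_formula a s ha hs i j hij (Finset.nonempty_Icc.mpr hij)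
  refine ⟨h1, ?_⟩
  rw [h1]
  apply le_antisymm
  · apply le_min
    · have h0 := Qf_nonneg a s hij
      omega
    · apply Finset.le_inf'
      intro l hl
      rw [Finset.mem_Icc] at hl
      have hfl : max (cnt a l j - cnt s l j) 0
          ≤ (Finset.Icc i j).sup' (Finset.nonempty_Icc.mpr hij)
              (fun l => max (cnt a l j - cnt s l j) 0) :=
        Finset.le_sup' (fun l => max (cnt a l j - cnt s l j) 0) (Finset.mem_Icc.mpr hl)
      have hsplit : cnt a i j = cnt a i (l-1) + cnt a l j := cnt_split a hl.1 (by omega)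
      have hs0 := cnt_nonneg hs l j
      omega
  · have hS : (Finset.Icc i j).sup' (Finset.nonempty_Icc.mpr hij)
        (fun l => max (cnt a l j - cnt s l j) 0)
        ≤ cnt a i j - min (cnt a i j) ((Finset.Icc i j).inf' (Finset.nonempty_Icc.mpr hij)
            (fun l => cnt a i (l - 1) + cnt s l j)) := by
      apply Finset.sup'_le
      intro l hl
      rw [Finset.mem_Icc] at hl
      have hI : (Finset.Icc i j).inf' (Finset.nonempty_Icc.mpr hij)
          (fun l => cnt a i (l - 1) + cnt s l j) ≤ cnt a i (l-1) + cnt s l j :=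
        Finset.inf'_le (fun l => cnt a i (l - 1) + cnt s l j) (Finset.mem_Icc.mpr hl)
      have hsplit : cnt a i j = cnt a i (l-1) + cnt a l j := cnt_split a hl.1 (by omega)
      omega
    omega
end

section
/- Let a and s be configurations such that (a,s) has finite queue lengths, and let i ≤ j be integers. If D(a,s)[i,j] < s[i,j], then Q_{i−1}(a,s) < max_{l ∈ [i,j]} ( s[i,l] − a[i,l] ). -/
open scoped BigOperators

lemma cnt_top (x : Config) {i j : ℤ} (h : i ≤ j) :
    cnt x i j = cnt x i (j - 1) + x j := by
  have : Finset.Icc i j = insert j (Finset.Icc i (j-1)) := by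
    ext k; simp only [Finset.mem_Icc, Finset.mem_insert]; omega
  rw [cnt, this, Finset.sum_insert (by simp), cnt]; ring

def Qset (a s : Config) (i : ℤ) : Set ℤ :=
  {q : ℤ | ∃ j ≤ i, q = max (cnt a j i - cnt s j i) 0}

lemma Qset_nonempty (a s : Config) (i : ℤ) : (Qset a s i).Nonempty :=
  ⟨max (cnt a i i - cnt s i i) 0, i, le_refl i, rfl⟩

lemma Qset_bdd (a s : Config) (hfq : FinQ a s) (i : ℤ) : BddAbove (Qset a s i) := by
  obtain ⟨M, hM⟩ := hfq i
  refine ⟨max M 0, ?_⟩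
  rintro q ⟨j, hj, rfl⟩
  exact max_le_max (hM ⟨j, hj, rfl⟩) le_rfl

lemma queue_mem (a s : Config) (hfq : FinQ a s) (i : ℤ) :
    queue a s i ∈ Qset a s i :=
  Int.csSup_mem (Qset_nonempty a s i) (Qset_bdd a s hfq i)

lemma queue_nonneg (a s : Config) (hfq : FinQ a s) (i : ℤ) :
    0 ≤ queue a s i := by
  obtain ⟨j, hj, hq⟩ := queue_mem a s hfq i
  rw [hq]; exact le_max_right _ _

lemma le_queue (a s : Config) (hfq : FinQ a s) {i j : ℤ} (hj : j ≤ i) :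
    max (cnt a j i - cnt s j i) 0 ≤ queue a s i :=
  le_csSup (Qset_bdd a s hfq i) ⟨j, hj, rfl⟩

/-- Lindley recursion. -/
lemma queue_rec (a s : Config) (hfq : FinQ a s) (i : ℤ) :
    queue a s i = max (queue a s (i - 1) + a i - s i) 0 := by
  apply le_antisymm
  · apply csSup_le (Qset_nonempty a s i)
    rintro q ⟨j, hj, rfl⟩
    rcases eq_or_lt_of_le hj with rfl | hj'
    · have hq := queue_nonneg a s hfq (j - 1)
      have h1 : cnt a j j - cnt s j j ≤ queue a s (j-1) + a j - s j := by
        unfold cnt; simp; omega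
      exact max_le (h1.trans (le_max_left _ _)) (le_max_right _ _)
    · have hj2 : j ≤ i - 1 := by omega
      have h0 := le_queue a s hfq hj2
      have ha' := cnt_top a (show j ≤ i by omega)
      have hs' := cnt_top s (show j ≤ i by omega)
      have h1 : cnt a j i - cnt s j i ≤ queue a s (i-1) + a i - s i := by
        have := le_trans (le_max_left (cnt a j (i-1) - cnt s j (i-1)) 0) h0
        omega
      exact max_le (h1.trans (le_max_left _ _)) (le_max_right _ _)
  · apply max_le
    · obtain ⟨j, hj, hjq⟩ := queue_mem a s hfq (i - 1)
      rcases le_or_gt (cnt a j (i-1) - cnt s j (i-1)) 0 with h | h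
      · have : queue a s (i-1) = 0 := by rw [hjq]; omega
        rw [this]
        have := le_queue a s hfq (le_refl i)
        have hc : cnt a i i - cnt s i i = a i - s i := by unfold cnt; simp
        have := le_trans (le_max_left (cnt a i i - cnt s i i) 0) this
        omega
      · have hji : j ≤ i := by omega
        have := le_queue a s hfq hji
        have ha' := cnt_top a hji
        have hs' := cnt_top s hji
        have := le_trans (le_max_left (cnt a j i - cnt s j i) 0) this
        omega
    · exact queue_nonneg a s hfq i

lemma dep_eq (a s : Config) (ha : IsConfig a) (hs : IsConfig s) (hfq : FinQ a s) (i : ℤ) :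
    queue a s i = queue a s (i - 1) + a i - dep a s i := by
  have hq := queue_nonneg a s hfq (i - 1)
  rw [queue_rec a s hfq i]
  unfold dep
  rcases ha i with ha' | ha' <;> rcases hs i with hs' | hs'
  · simp [ha', hs']; omega
  · rcases eq_or_lt_of_le hq with hq0 | hqp
    · simp [ha', hs', ← hq0]
    · simp [ha', hs', hqp]; omega
  · simp [ha', hs']; omega
  · simp [ha', hs']; omega

lemma queue_telescope (a s : Config) (ha : IsConfig a) (hs : IsConfig s) (hfq : FinQ a s)
    (i : ℤ) : ∀ n : ℕ, queue a s (i - 1 + n) =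
      queue a s (i - 1) + cnt a i (i - 1 + n) - cnt (dep a s) i (i - 1 + n) := by
  intro n
  induction n with
  | zero => simp [cnt]
  | succ m ih =>
    have hle : i ≤ i - 1 + (m + 1 : ℕ) := by push_cast; omega
    have e1 := cnt_top a hle
    have e2 := cnt_top (dep a s) hle
    have e3 := dep_eq a s ha hs hfq (i - 1 + (m + 1 : ℕ))
    have harith : (i - 1 + (m+1:ℕ)) - 1 = i - 1 + (m:ℕ) := by push_cast; ring
    rw [harith] at e3
    have harith2 : (i - 1 + (m+1:ℕ)) - 1 = i - 1 + (m:ℕ) := harith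
    rw [e1, e2, e3, harith2, ih]; ring
lemma dep_le (a s : Config) (hs : IsConfig s) (l : ℤ) : dep a s l ≤ s l := by
  unfold dep
  rcases hs l with h | h <;> simp [h]
  split <;> omega


/-- If `D(a,s)[i,j] < s[i,j]` then
`Q_{i−1}(a,s) < max_{l ∈ [i,j]} (s[i,l] − a[i,l])`. -/
theorem stmt3 (a s : Config) (ha : IsConfig a) (hs : IsConfig s) (hfq : FinQ a s)
    (i j : ℤ) (hij : i ≤ j)
    (hlt : cnt (dep a s) i j < cnt s i j) :
    queue a s (i - 1) < (Finset.Icc i j).sup' (Finset.nonempty_Icc.mpr hij)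
      (fun l => cnt s i l - cnt a i l) := by
  obtain ⟨l, hl, hdl⟩ := Finset.exists_lt_of_sum_lt hlt
  rw [Finset.mem_Icc] at hl
  have hsl : s l = 1 := by
    rcases hs l with h | h
    · exfalso
      have h2 : (0:ℤ) ≤ dep a s l := by unfold dep; split <;> omega
      omega
    · exact h
  have hdl0 : dep a s l = 0 := by
    unfold dep at hdl ⊢; split at hdl <;> [omega; simp_all]
  have hcond : ¬ (s l = 1 ∧ (0 < queue a s (l - 1) ∨ a l = 1)) := by
    intro h; simp only [dep, if_pos h] at hdl0; omega
  have hq0 : queue a s (l - 1) = 0 := by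
    have h1 := queue_nonneg a s hfq (l - 1)
    by_contra h
    exact hcond ⟨hsl, Or.inl (by omega)⟩
  have hal : a l = 0 := by
    rcases ha l with h | h
    · exact h
    · exact absurd ⟨hsl, Or.inr h⟩ hcond
  -- telescoping up to l - 1
  have hn : l - 1 = i - 1 + ((l - i).toNat : ℤ) := by omega
  have htel := queue_telescope a s ha hs hfq i (l - i).toNat
  rw [← hn] at htel
  rw [hq0] at htel
  have hmono : cnt (dep a s) i (l - 1) ≤ cnt s i (l - 1) :=
    Finset.sum_le_sum fun k _ => dep_le a s hs k
  have hsl' := cnt_top s hl.1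
  have hal' := cnt_top a hl.1
  have hfin : queue a s (i - 1) < cnt s i l - cnt a i l := by omega
  calc queue a s (i - 1) < cnt s i l - cnt a i l := hfin
    _ ≤ _ := Finset.le_sup' (fun l => cnt s i l - cnt a i l) (Finset.mem_Icc.mpr hl)
end
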